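/- Suppose F = f + Ψ where f : ℝⁿ → ℝ is convex and L-smooth (L > 0) and Ψ : ℝⁿ → ℝ ∪ {+∞} is proper, closed and convex, and suppose F attains its minimum at x*. Let x₀ ∈ ℝⁿ, let M₁ be an affine subspace containing x₀ + span{G_{1/L}(x₀)}, and suppose {M_k}_{k≥1}, {x_k}, {y_k}, {z_k} satisfy the idealized-algorithm conditions: for each k ≥ 1, y_k minimizes ‖y − x*‖ over M_k; x_k minimizes F over M_k; z_k ∈ M_k satisfies ⟨G_{1/L}(z_k), y_k − z_k⟩ ≥ 0 and −⟨G_{1/L}(z_k), x_k − z_k⟩ ≤ 0; and M_{k+1} contains z_k + span{G_{1/L}(z_k)}, y_k + span{G_{1/L}(z_k)}, and x_k + span{G_{1/L}(x_k)}. Then for all k ≥ 1, F(x_k) − F(x*) ≤ 2(L‖x₀ − x*‖² + F(x₀) − F(x*)) / (k(k+1)). -/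

import Mathlib

open scoped RealInnerProductSpace

lemma convex_grad_ineq {n : ℕ} (f : EuclideanSpace ℝ (Fin n) → ℝ)
    (f' : EuclideanSpace ℝ (Fin n) → EuclideanSpace ℝ (Fin n))
    (hdiff : ∀ x, HasGradientAt f (f' x) x)
    (hfconvex : ConvexOn ℝ Set.univ f)
    (x u : EuclideanSpace ℝ (Fin n)) :
    f x + ⟪f' x, u - x⟫ ≤ f u := by
  set g : ℝ → ℝ := fun s => f (x + s • (u - x)) with hgdef
  have hline : HasDerivAt (fun s : ℝ => x + s • (u - x)) (u - x) 0 := by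
    simpa using ((hasDerivAt_id (0:ℝ)).smul_const (u - x)).const_add x
  have hg : HasDerivAt g ⟪f' x, u - x⟫ 0 := by
    have h1 := (hdiff x).hasFDerivAt
    have h2 : HasDerivAt g ((InnerProductSpace.toDual ℝ _ (f' x)) (u - x)) 0 := by
      have h1' : HasFDerivAt f ((InnerProductSpace.toDual ℝ _) (f' x)) (x + (0:ℝ) • (u - x)) := by
        simpa using h1
      have := h1'.comp_hasDerivAt 0 hline
      simpa [hgdef, Function.comp_def] using this
    simpa [InnerProductSpace.toDual_apply_apply] using h2
  have hslope : Filter.Tendsto (slope g 0) (nhdsWithin 0 (Set.Ioi 0)) (nhds ⟪f' x, u - x⟫) := by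
    have := hasDerivAt_iff_tendsto_slope.mp hg
    exact this.mono_left (nhdsWithin_mono 0 (by intro s hs; exact ne_of_gt hs))
  have hbound : ∀ s ∈ Set.Ioc (0:ℝ) 1, slope g 0 s ≤ f u - f x := by
    intro s hs
    have hs1 := hs.1
    have hs2 := hs.2
    have hcvx := hfconvex.2 (Set.mem_univ x) (Set.mem_univ u)
      (sub_nonneg.mpr hs2) hs1.le (by ring : (1 - s) + s = 1)
    have hpt : (1 - s) • x + s • u = x + s • (u - x) := by
      module
    rw [hpt] at hcvx
    rw [slope_def_field]
    have h0 : g 0 = f x := by simp [hgdef]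
    have : g s ≤ f x + s * (f u - f x) := by
      calc g s ≤ (1 - s) * f x + s * f u := hcvx
      _ = f x + s * (f u - f x) := by ring
    rw [h0, sub_zero, div_le_iff₀ hs1]
    nlinarith
  have : ⟪f' x, u - x⟫ ≤ f u - f x := by
    refine le_of_tendsto hslope ?_
    filter_upwards [Ioc_mem_nhdsGT_of_mem (Set.mem_Ico.mpr ⟨le_refl 0, zero_lt_one⟩)] with s hs
    exact hbound s hs
  linarith

lemma limit_aux (A B D : ℝ) (hD : 0 ≤ D) (h : ∀ l : ℝ, 0 < l → l ≤ 1 → A ≤ B + l * D) :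
    A ≤ B := by
  by_contra hc
  push_neg at hc
  set l := min 1 ((A - B) / (2 * (D + 1))) with hl
  have hABpos : 0 < A - B := by linarith
  have hD1 : (0:ℝ) < D + 1 := by linarith
  have hlpos : 0 < l := lt_min one_pos (by positivity)
  have hle1 : l ≤ 1 := min_le_left _ _
  have h2 := h l hlpos hle1
  have h3 : l * D ≤ ((A - B) / (2 * (D + 1))) * D :=
    mul_le_mul_of_nonneg_right (min_le_right _ _) hD
  have h4 : ((A - B) / (2 * (D + 1))) * D < A - B := by
    rw [div_mul_eq_mul_div, div_lt_iff₀ (by positivity)]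
    nlinarith
  linarith

lemma prox_var {n : ℕ} (L : ℝ) (hL : 0 < L)
    (Ψ : EuclideanSpace ℝ (Fin n) → EReal) (hbot : ∀ x, Ψ x ≠ ⊥)
    (hconvex : ∀ x y : EuclideanSpace ℝ (Fin n), ∀ a b : ℝ, 0 ≤ a → 0 ≤ b → a + b = 1 →
      Ψ (a • x + b • y) ≤ (a : EReal) * Ψ x + (b : EReal) * Ψ y)
    (prox : ℝ → EuclideanSpace ℝ (Fin n) → EuclideanSpace ℝ (Fin n))
    (hprox : ∀ t : ℝ, 0 < t → ∀ x z : EuclideanSpace ℝ (Fin n),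
      Ψ (prox t x) + ((‖x - prox t x‖ ^ 2 / (2 * t) : ℝ) : EReal)
        ≤ Ψ z + ((‖x - z‖ ^ 2 / (2 * t) : ℝ) : EReal))
    (v u : EuclideanSpace ℝ (Fin n)) (ψu : ℝ) (hu : Ψ u = (ψu : EReal))
    (ψp : ℝ) (hp : Ψ (prox (1/L) v) = (ψp : EReal)) :
    ψp + L * ⟪v - prox (1/L) v, u - prox (1/L) v⟫ ≤ ψu := by
  have ht : (0:ℝ) < 1/L := by positivity
  set p := prox (1/L) v with hpdef
  have hper : ∀ l : ℝ, 0 < l → l ≤ 1 →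
      L * ⟪v - p, u - p⟫ ≤ (ψu - ψp) + l * ((L/2) * ‖u - p‖^2) := by
    intro l hl0 hl1
    have hcomb : (1 - l) • p + l • u = p + l • (u - p) := by module
    have hcvx := hconvex p u (1 - l) l (by linarith) hl0.le (by ring)
    rw [hcomb, hu, hp] at hcvx
    have hcvx' : Ψ (p + l • (u - p)) ≤ (((1 - l) * ψp + l * ψu : ℝ) : EReal) := by
      calc Ψ (p + l • (u - p)) ≤ ((1 - l : ℝ) : EReal) * (ψp : EReal) + (l : EReal) * (ψu : EReal) := hcvx
        _ = (((1 - l) * ψp + l * ψu : ℝ) : EReal) := by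
            rw [← EReal.coe_mul, ← EReal.coe_mul, ← EReal.coe_add]
    have hpx := hprox (1/L) ht v (p + l • (u - p))
    rw [← hpdef, hp] at hpx
    have hh : (ψp : EReal) + ((‖v - p‖ ^ 2 / (2 * (1/L)) : ℝ) : EReal)
        ≤ (((1 - l) * ψp + l * ψu : ℝ) : EReal)
          + ((‖v - (p + l • (u - p))‖ ^ 2 / (2 * (1/L)) : ℝ) : EReal) :=
      le_trans hpx (add_le_add hcvx' le_rfl)
    rw [← EReal.coe_add, ← EReal.coe_add, EReal.coe_le_coe_iff] at hh
    have hvexp : v - (p + l • (u - p)) = (v - p) - l • (u - p) := by abel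
    have hexp : ‖(v - p) - l • (u - p)‖^2
        = ‖v - p‖^2 - 2 * (l * ⟪v - p, u - p⟫) + l^2 * ‖u - p‖^2 := by
      rw [norm_sub_sq_real, real_inner_smul_right, norm_smul, Real.norm_eq_abs, mul_pow, sq_abs]
    rw [hvexp, hexp] at hh
    have hdivL : ∀ X : ℝ, X / (2 * (1/L)) = X * (L/2) := by
      intro X; field_simp
    simp only [hdivL] at hh
    nlinarith [hh, mul_pos hl0 hl0]
  have := limit_aux (L * ⟪v - p, u - p⟫) (ψu - ψp) ((L/2) * ‖u - p‖^2)
    (by positivity) hper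
  linarith

lemma key_ineq {n : ℕ} (L : ℝ) (hL : 0 < L)
    (f : EuclideanSpace ℝ (Fin n) → ℝ)
    (f' : EuclideanSpace ℝ (Fin n) → EuclideanSpace ℝ (Fin n))
    (hdiff : ∀ x, HasGradientAt f (f' x) x)
    (hfconvex : ConvexOn ℝ Set.univ f)
    (hsmooth : ∀ x y : EuclideanSpace ℝ (Fin n),
      |f x - f y - ⟪f' y, x - y⟫| ≤ L / 2 * ‖x - y‖ ^ 2)
    (Ψ : EuclideanSpace ℝ (Fin n) → EReal) (hbot : ∀ x, Ψ x ≠ ⊥)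
    (hconvex : ∀ x y : EuclideanSpace ℝ (Fin n), ∀ a b : ℝ, 0 ≤ a → 0 ≤ b → a + b = 1 →
      Ψ (a • x + b • y) ≤ (a : EReal) * Ψ x + (b : EReal) * Ψ y)
    (prox : ℝ → EuclideanSpace ℝ (Fin n) → EuclideanSpace ℝ (Fin n))
    (hprox : ∀ t : ℝ, 0 < t → ∀ x z : EuclideanSpace ℝ (Fin n),
      Ψ (prox t x) + ((‖x - prox t x‖ ^ 2 / (2 * t) : ℝ) : EReal)
        ≤ Ψ z + ((‖x - z‖ ^ 2 / (2 * t) : ℝ) : EReal))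
    (w u g : EuclideanSpace ℝ (Fin n))
    (hg : (1/L) • g = w - prox (1/L) (w - (1/L) • f' w))
    (ψu : ℝ) (hu : Ψ u = (ψu : EReal))
    (ψp : ℝ) (hp : Ψ (prox (1/L) (w - (1/L) • f' w)) = (ψp : EReal)) :
    f (prox (1/L) (w - (1/L) • f' w)) + ψp
      ≤ f u + ψu + ⟪g, w - u⟫ - ‖g‖^2 / (2*L) := by
  set p := prox (1/L) (w - (1/L) • f' w) with hpdef
  have hp_eq : p = w - (1/L) • g := by rw [hg]; abel
  have hpw : p - w = -((1/L) • g) := by rw [hp_eq]; abel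
  have hsm := (abs_le.mp (hsmooth p w)).2
  rw [hpw] at hsm
  have h1 : ⟪f' w, -((1/L) • g)⟫ = -((1/L) * ⟪f' w, g⟫) := by
    rw [inner_neg_right, real_inner_smul_right]
  have h2 : ‖-((1/L) • g)‖^2 = (1/L)^2 * ‖g‖^2 := by
    rw [norm_neg, norm_smul, Real.norm_eq_abs, mul_pow, sq_abs]
  rw [h1, h2] at hsm
  have A2 := convex_grad_ineq f f' hdiff hfconvex w u
  have A3 := prox_var L hL Ψ hbot hconvex prox hprox (w - (1/L) • f' w) u ψu hu ψp hp
  rw [← hpdef] at A3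
  have h3 : w - (1/L) • f' w - p = (1/L) • (g - f' w) := by
    rw [hp_eq]; module
  have h4 : u - p = (u - w) + (1/L) • g := by rw [hp_eq]; abel
  have h5 : L * ⟪w - (1/L) • f' w - p, u - p⟫
      = ⟪g, u - w⟫ + L * ((1/L) * ((1/L) * ‖g‖^2)) - ⟪f' w, u - w⟫
        - L * ((1/L) * ((1/L) * ⟪f' w, g⟫)) := by
    rw [h3, h4, real_inner_smul_left, inner_add_right, inner_sub_left, inner_sub_left,
      real_inner_smul_right, real_inner_smul_right, real_inner_self_eq_norm_sq]
    have hLL : L * (1/L) = 1 := by field_simp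
    field_simp
    ring
  rw [h5] at A3
  have h6 : ⟪g, w - u⟫ = -⟪g, u - w⟫ := by
    rw [← neg_sub u w, inner_neg_right]
  rw [h6]
  have h7 : L/2 * ((1/L)^2 * ‖g‖^2) = ‖g‖^2 / (2*L) := by
    field_simp
  have h8 : L * ((1/L) * ((1/L) * ‖g‖^2)) = 2 * (‖g‖^2 / (2*L)) := by
    field_simp
  have h9 : L * ((1/L) * ((1/L) * ⟪f' w, g⟫)) = (1/L) * ⟪f' w, g⟫ := by
    field_simp
  linarith [hsm, A2, A3]

set_option maxHeartbeats 1000000 in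
/-- `O(1/k²)` convergence rate of the idealized algorithmic
framework for convex composite minimization. -/
theorem idealized_algorithm_convex_rate {n : ℕ} (L : ℝ) (hL : 0 < L)
    (f : EuclideanSpace ℝ (Fin n) → ℝ)
    (f' : EuclideanSpace ℝ (Fin n) → EuclideanSpace ℝ (Fin n))
    (hdiff : ∀ x, HasGradientAt f (f' x) x)
    (hfconvex : ConvexOn ℝ Set.univ f)
    (hsmooth : ∀ x y : EuclideanSpace ℝ (Fin n),
      |f x - f y - ⟪f' y, x - y⟫| ≤ L / 2 * ‖x - y‖ ^ 2)
    (Ψ : EuclideanSpace ℝ (Fin n) → EReal)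
    (hproper : (∀ x, Ψ x ≠ ⊥) ∧ (∃ x, Ψ x ≠ ⊤))
    (hclosed : LowerSemicontinuous Ψ)
    (hconvex : ∀ x y : EuclideanSpace ℝ (Fin n), ∀ a b : ℝ, 0 ≤ a → 0 ≤ b → a + b = 1 →
      Ψ (a • x + b • y) ≤ (a : EReal) * Ψ x + (b : EReal) * Ψ y)
    (prox : ℝ → EuclideanSpace ℝ (Fin n) → EuclideanSpace ℝ (Fin n))
    (hprox : ∀ t : ℝ, 0 < t → ∀ x z : EuclideanSpace ℝ (Fin n),
      Ψ (prox t x) + ((‖x - prox t x‖ ^ 2 / (2 * t) : ℝ) : EReal)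
        ≤ Ψ z + ((‖x - z‖ ^ 2 / (2 * t) : ℝ) : EReal))
    (F : EuclideanSpace ℝ (Fin n) → EReal)
    (hF : ∀ x, F x = (f x : EReal) + Ψ x)
    (G : ℝ → EuclideanSpace ℝ (Fin n) → EuclideanSpace ℝ (Fin n))
    (hG : ∀ t x, G t x = t⁻¹ • (x - prox t (x - t • f' x)))
    (xstar : EuclideanSpace ℝ (Fin n)) (hxstar : ∀ w, F xstar ≤ F w)
    (M : ℕ → AffineSubspace ℝ (EuclideanSpace ℝ (Fin n)))
    (x y z : ℕ → EuclideanSpace ℝ (Fin n))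
    (hM1 : ∀ c : ℝ, x 0 + c • G (1 / L) (x 0) ∈ M 1)
    (hy : ∀ k, 1 ≤ k → y k ∈ M k ∧ ∀ w ∈ M k, ‖y k - xstar‖ ≤ ‖w - xstar‖)
    (hx : ∀ k, 1 ≤ k → x k ∈ M k ∧ ∀ w ∈ M k, F (x k) ≤ F w)
    (hz : ∀ k, 1 ≤ k → z k ∈ M k ∧
      0 ≤ ⟪G (1 / L) (z k), y k - z k⟫ ∧
      -⟪G (1 / L) (z k), x k - z k⟫ ≤ 0)
    (hM : ∀ k, 1 ≤ k → ∀ c : ℝ,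
      z k + c • G (1 / L) (z k) ∈ M (k + 1) ∧
      y k + c • G (1 / L) (z k) ∈ M (k + 1) ∧
      x k + c • G (1 / L) (x k) ∈ M (k + 1)) :
    ∀ k : ℕ, 1 ≤ k →
      F (x k) - F xstar
        ≤ ((2 / ((k : ℝ) * ((k : ℝ) + 1)) : ℝ) : EReal)
          * (((L * ‖x 0 - xstar‖ ^ 2 : ℝ) : EReal) + (F (x 0) - F xstar)) := by
  obtain ⟨hbot, x1, hx1⟩ := hproper
  have ht : (0:ℝ) < 1/L := by positivity
  have hrep : ∀ a : EReal, a ≠ ⊥ → a ≠ ⊤ → ∃ r : ℝ, a = (r : EReal) :=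
    fun a h1 h2 => ⟨a.toReal, (EReal.coe_toReal h2 h1).symm⟩
  obtain ⟨ψ1, hψ1⟩ := hrep _ (hbot x1) hx1
  -- prox values are finite
  have hproxfin : ∀ v, Ψ (prox (1/L) v) ≠ ⊤ := by
    intro v htop
    have h := hprox (1/L) ht v x1
    rw [htop, hψ1, EReal.top_add_coe, ← EReal.coe_add] at h
    exact EReal.coe_ne_top _ (top_le_iff.mp h)
  have hPg : ∀ w, (1/L) • G (1/L) w = w - prox (1/L) (w - (1/L) • f' w) := by
    intro w
    rw [hG]
    exact smul_inv_smul₀ (ne_of_gt ht) _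
  have hPmem : ∀ w, w + (-(1/L)) • G (1/L) w = prox (1/L) (w - (1/L) • f' w) := by
    intro w; rw [neg_smul, hPg]; abel
  choose ψP hψP using fun w : EuclideanSpace ℝ (Fin n) =>
    hrep _ (hbot (prox (1/L) (w - (1/L) • f' w))) (hproxfin (w - (1/L) • f' w))
  have hkey : ∀ w u : EuclideanSpace ℝ (Fin n), ∀ ψu : ℝ, Ψ u = (ψu : EReal) →
      f (prox (1/L) (w - (1/L) • f' w)) + ψP w
        ≤ f u + ψu + ⟪G (1/L) w, w - u⟫ - ‖G (1/L) w‖^2/(2*L) :=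
    fun w u ψu hu => key_ineq L hL f f' hdiff hfconvex hsmooth Ψ hbot hconvex prox hprox
      w u _ (hPg w) ψu hu (ψP w) (hψP w)
  have hFP : ∀ w, F (prox (1/L) (w - (1/L) • f' w))
      = ((f (prox (1/L) (w - (1/L) • f' w)) + ψP w : ℝ) : EReal) := by
    intro w; rw [hF, hψP]; exact (EReal.coe_add _ _).symm
  -- F xstar is finite
  have hFx1 : F x1 = ((f x1 + ψ1 : ℝ) : EReal) := by
    rw [hF, hψ1]; exact (EReal.coe_add _ _).symm
  have hFstop : F xstar ≠ ⊤ := by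
    intro h
    have := hxstar x1
    rw [h, hFx1, top_le_iff] at this
    exact EReal.coe_ne_top _ this
  have hΨstop : Ψ xstar ≠ ⊤ := by
    intro h; apply hFstop; rw [hF, h, EReal.coe_add_top]
  obtain ⟨ψs, hψs⟩ := hrep _ (hbot xstar) hΨstop
  set Fs : ℝ := f xstar + ψs with hFsdef
  have hFs : F xstar = (Fs : EReal) := by
    rw [hF, hψs]; exact (EReal.coe_add _ _).symm
  -- Ψ (x k) is finite for k ≥ 1
  have hΨxtop : ∀ k, 1 ≤ k → Ψ (x k) ≠ ⊤ := by
    intro k hk htop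
    have hFxk : F (x k) = ⊤ := by rw [hF, htop, EReal.coe_add_top]
    obtain ⟨j, rfl⟩ : ∃ j, k = j + 1 := ⟨k - 1, by omega⟩
    by_cases hj : 1 ≤ j
    · have hmem := (hM j hj (-(1/L))).1
      rw [hPmem (z j)] at hmem
      have hle := (hx (j+1) (by omega)).2 _ hmem
      rw [hFxk, hFP (z j), top_le_iff] at hle
      exact EReal.coe_ne_top _ hle
    · have hj0 : j = 0 := by omega
      subst hj0
      have hmem := hM1 (-(1/L))
      rw [hPmem (x 0)] at hmem
      have hle := (hx 1 le_rfl).2 _ hmem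
      rw [hFxk, hFP (x 0), top_le_iff] at hle
      exact EReal.coe_ne_top _ hle
  have hψx : ∀ k, 1 ≤ k → Ψ (x k) = (((Ψ (x k)).toReal : ℝ) : EReal) :=
    fun k hk => (EReal.coe_toReal (hΨxtop k hk) (hbot _)).symm
  set φ : ℕ → ℝ := fun k => f (x k) + (Ψ (x k)).toReal with hφdef
  have hFxk : ∀ k, 1 ≤ k → F (x k) = ((φ k : ℝ) : EReal) := by
    intro k hk
    rw [hF, hψx k hk]
    exact (EReal.coe_add _ _).symm
  have hδnn : ∀ k, 1 ≤ k → 0 ≤ φ k - Fs := by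
    intro k hk
    have := hxstar (x k)
    rw [hFs, hFxk k hk, EReal.coe_le_coe_iff] at this
    linarith
  set r : ℕ → ℝ := fun k => ‖y k - xstar‖ with hrdef
  -- step inequality (descent in F)
  have hstep : ∀ k, 1 ≤ k → φ (k+1) ≤ f (prox (1/L) (z k - (1/L) • f' (z k))) + ψP (z k) := by
    intro k hk
    have hmem := (hM k hk (-(1/L))).1
    rw [hPmem (z k)] at hmem
    have hle := (hx (k+1) (by omega)).2 _ hmem
    rw [hFxk (k+1) (by omega), hFP (z k), EReal.coe_le_coe_iff] at hle
    exact hle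
  have hR1 : ∀ k, 1 ≤ k →
      φ (k+1) ≤ φ k - ‖G (1/L) (z k)‖^2/(2*L) := by
    intro k hk
    have h1 := hstep k hk
    have h2 := hkey (z k) (x k) ((Ψ (x k)).toReal) (hψx k hk)
    have h3 : ⟪G (1/L) (z k), z k - x k⟫ ≤ 0 := by
      have hzz := (hz k hk).2.2
      have : ⟪G (1/L) (z k), z k - x k⟫ = -⟪G (1/L) (z k), x k - z k⟫ := by
        rw [← neg_sub (x k) (z k), inner_neg_right]
      linarith
    have hφk : φ k = f (x k) + (Ψ (x k)).toReal := rfl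
    linarith
  have hR2 : ∀ k, 1 ≤ k →
      φ (k+1) ≤ Fs + ⟪G (1/L) (z k), y k - xstar⟫ - ‖G (1/L) (z k)‖^2/(2*L) := by
    intro k hk
    have h1 := hstep k hk
    have h2 := hkey (z k) xstar ψs hψs
    have h3 : ⟪G (1/L) (z k), z k - xstar⟫ ≤ ⟪G (1/L) (z k), y k - xstar⟫ := by
      have hsplit : z k - xstar = (z k - y k) + (y k - xstar) := by abel
      have hyz := (hz k hk).2.1
      have h4 : ⟪G (1/L) (z k), z k - y k⟫ = -⟪G (1/L) (z k), y k - z k⟫ := by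
        rw [← neg_sub (y k) (z k), inner_neg_right]
      rw [hsplit, inner_add_right]
      linarith
    linarith
  -- distance monotonicity and drop
  have hrmono : ∀ k, 1 ≤ k → r (k+1) ≤ r k := by
    intro k hk
    have hmem := (hM k hk 0).2.1
    rw [zero_smul, add_zero] at hmem
    exact (hy (k+1) (by omega)).2 _ hmem
  have hrdrop : ∀ k, 1 ≤ k → 0 < ‖G (1/L) (z k)‖^2 →
      ‖G (1/L) (z k)‖^2 * r (k+1)^2
        ≤ ‖G (1/L) (z k)‖^2 * r k ^2 - ⟪G (1/L) (z k), y k - xstar⟫^2 := by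
    intro k hk hgg
    set gg := ‖G (1/L) (z k)‖^2 with hggdef
    set a := ⟪G (1/L) (z k), y k - xstar⟫ with hadef
    set c : ℝ := -(a/gg) with hcdef
    have hmem := (hM k hk c).2.1
    have hle := (hy (k+1) (by omega)).2 _ hmem
    have hvec : y k + c • G (1/L) (z k) - xstar = (y k - xstar) + c • G (1/L) (z k) := by abel
    have hnorm : ‖y k + c • G (1/L) (z k) - xstar‖^2 = r k^2 + 2*(c*a) + c^2*gg := by
      rw [hvec, norm_add_sq_real, real_inner_smul_right, norm_smul, Real.norm_eq_abs,
        mul_pow, sq_abs, real_inner_comm]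
    have hsq : r (k+1)^2 ≤ r k^2 + 2*(c*a) + c^2*gg := by
      rw [← hnorm]
      exact pow_le_pow_left₀ (norm_nonneg _) hle 2
    have := mul_le_mul_of_nonneg_left hsq hgg.le
    calc gg * r (k+1)^2 ≤ gg * (r k^2 + 2*(c*a) + c^2*gg) := this
      _ = gg * r k^2 - a^2 := by
          rw [hcdef]; field_simp; ring
  -- Lyapunov decrease
  have hLya : ∀ k : ℕ, 1 ≤ k →
      L * r (k+1)^2 + (((k:ℝ)+1)*((k:ℝ)+2)/2) * (φ (k+1) - Fs)
        ≤ L * r k^2 + ((k:ℝ)*((k:ℝ)+1)/2) * (φ k - Fs) := by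
    intro k hk
    have hK1 : (1:ℝ) ≤ (k:ℝ) := by exact_mod_cast hk
    set K := (k:ℝ)
    set δ' := φ (k+1) - Fs with hδ'def
    set δ := φ k - Fs with hδdef
    have hδ'nn : 0 ≤ δ' := hδnn (k+1) (by omega)
    have hδnn' : 0 ≤ δ := hδnn k hk
    have h1 := hR1 k hk
    have h2 := hR2 k hk
    have hrm := hrmono k hk
    have hrnn : (0:ℝ) ≤ r (k+1) := norm_nonneg _
    have hrnn' : (0:ℝ) ≤ r k := norm_nonneg _
    by_cases hgg : ‖G (1/L) (z k)‖^2 = 0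
    · have hg0 : G (1/L) (z k) = 0 := by
        rw [pow_eq_zero_iff (two_ne_zero)] at hgg
        exact norm_eq_zero.mp hgg
      rw [hg0] at h2
      rw [inner_zero_left, norm_zero] at h2
      have hδ'le : δ' ≤ 0 := by
        norm_num at h2
        rw [hδ'def]
        linarith
      have hδ'0 : δ' = 0 := le_antisymm hδ'le hδ'nn
      have hr2 : r (k+1)^2 ≤ r k^2 := pow_le_pow_left₀ hrnn hrm 2
      have hc : 0 ≤ K*(K+1)/2 * δ := by
        apply mul_nonneg _ hδnn'
        nlinarith
      rw [hδ'0, mul_zero, add_zero]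
      linarith [mul_le_mul_of_nonneg_left hr2 hL.le]
    · have hggpos : 0 < ‖G (1/L) (z k)‖^2 :=
        lt_of_le_of_ne (sq_nonneg _) (Ne.symm hgg)
      set q : ℝ := ‖G (1/L) (z k)‖^2/(2*L) with hqdef
      have hqpos : 0 < q := by positivity
      have hgq : ‖G (1/L) (z k)‖^2 = 2*L*q := by
        rw [hqdef]; field_simp
      set a := ⟪G (1/L) (z k), y k - xstar⟫ with hadef
      have hR1' : δ' ≤ δ - q := by rw [hδ'def, hδdef]; linarith
      have hR2' : δ' ≤ a - q := by rw [hδ'def]; linarith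
      have hrd := hrdrop k hk hggpos
      rw [hgq] at hrd
      have hA2 : (δ' + q)^2 ≤ a^2 := by
        apply pow_le_pow_left₀ (by linarith) (by linarith)
      have hmain : (δ' + q)^2 ≤ 2*L*q*(r k^2 - r (k+1)^2) := by nlinarith [hrd, hA2]
      have H1 : q*(δ'+q) ≤ q*δ := mul_le_mul_of_nonneg_left (by linarith) hqpos.le
      have H5 := mul_le_mul_of_nonneg_left H1 (show (0:ℝ) ≤ K*(K+1) by nlinarith)
      have hB : 2*q*((K+1)*(K+2)/2*δ' - K*(K+1)/2*δ) ≤ (δ'+q)^2 := by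
        clear_value K δ' δ q
        nlinarith [sq_nonneg (δ' - K*q), mul_nonneg (show (0:ℝ) ≤ K+1 by linarith) (sq_nonneg q), H5]
      have hfin : (2*q)*((K+1)*(K+2)/2*δ' - K*(K+1)/2*δ)
          ≤ (2*q)*(L*(r k^2 - r (k+1)^2)) := by nlinarith [hB, hmain]
      have := le_of_mul_le_mul_left hfin (by positivity : (0:ℝ) < 2*q)
      linarith
  -- telescoping
  have hS : ∀ k : ℕ, 1 ≤ k →
      L * r k^2 + ((k:ℝ)*((k:ℝ)+1)/2) * (φ k - Fs) ≤ L * r 1^2 + (φ 1 - Fs) := by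
    intro k hk
    induction k, hk using Nat.le_induction with
    | base => push_cast; ring_nf; rfl
    | succ m hm ih =>
      have := hLya m hm
      push_cast
      push_cast at this ih
      linarith
  -- main case split
  intro k hk
  have hK1 : (1:ℝ) ≤ (k:ℝ) := by exact_mod_cast hk
  have hcpos : (0:ℝ) < 2 / ((k:ℝ) * ((k:ℝ) + 1)) := by positivity
  by_cases hx0top : Ψ (x 0) = ⊤
  · have hFx0 : F (x 0) = ⊤ := by rw [hF, hx0top, EReal.coe_add_top]
    rw [hFx0, hFs, EReal.top_sub_coe]
    have : ((L * ‖x 0 - xstar‖ ^ 2 : ℝ) : EReal) + ⊤ = ⊤ := EReal.coe_add_top _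
    rw [this, EReal.coe_mul_top_of_pos hcpos]
    exact le_top
  · obtain ⟨ψ0, hψ0⟩ := hrep _ (hbot (x 0)) hx0top
    have hFx0 : F (x 0) = ((f (x 0) + ψ0 : ℝ) : EReal) := by
      rw [hF, hψ0]; exact (EReal.coe_add _ _).symm
    set φ0 : ℝ := f (x 0) + ψ0 with hφ0def
    have hδ0nn : 0 ≤ φ0 - Fs := by
      have := hxstar (x 0)
      rw [hFs, hFx0, EReal.coe_le_coe_iff] at this
      linarith
    have hbase_r : r 1 ≤ ‖x 0 - xstar‖ := by
      have hmem := hM1 0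
      rw [zero_smul, add_zero] at hmem
      exact (hy 1 le_rfl).2 _ hmem
    have hbase_φ : φ 1 ≤ φ0 := by
      have hmem := hM1 (-(1/L))
      rw [hPmem (x 0)] at hmem
      have hle := (hx 1 le_rfl).2 _ hmem
      rw [hFxk 1 le_rfl, hFP (x 0), EReal.coe_le_coe_iff] at hle
      have h2 := hkey (x 0) (x 0) ψ0 hψ0
      rw [sub_self, inner_zero_right] at h2
      have hgn : 0 ≤ ‖G (1/L) (x 0)‖^2/(2*L) := by positivity
      have h3 := le_trans hle h2
      clear_value φ0 φ Fs r
      linarith only [h3, hgn, hφ0def]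
    have hSk := hS k hk
    have hr1sq : L * r 1^2 ≤ L * ‖x 0 - xstar‖^2 :=
      mul_le_mul_of_nonneg_left (pow_le_pow_left₀ (norm_nonneg _) hbase_r 2) hL.le
    have hrknn : 0 ≤ L * r k^2 := by positivity
    have hkey2 : ((k:ℝ)*((k:ℝ)+1)/2) * (φ k - Fs) ≤ L * ‖x 0 - xstar‖^2 + (φ0 - Fs) := by
      clear_value φ0 φ Fs r
      linarith only [hSk, hr1sq, hrknn, hbase_φ, hδ0nn, hδnn 1 le_rfl]
    have hreal : φ k - Fs ≤ 2 / ((k:ℝ) * ((k:ℝ) + 1)) * (L * ‖x 0 - xstar‖^2 + (φ0 - Fs)) := by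
      rw [div_mul_eq_mul_div, le_div_iff₀ (by positivity)]
      clear_value φ0 φ Fs r
      nlinarith [hkey2]
    rw [hFxk k hk, hFs, hFx0, ← EReal.coe_sub, ← EReal.coe_sub, ← EReal.coe_add, ← EReal.coe_mul,
      EReal.coe_le_coe_iff]
    exact hreal
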